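/- The tangent curve T(t) = (sin t cos 2t, sin t sin 2t, cos t) for t ∈ [0, 2π] is unit norm, satisfies the closure condition ∫₀^{2π} T(t) dt = 0, but does not satisfy the zero-swept-area condition: ∫₀^{2π} T(t) × T'(t) dt ≠ 0. -/

import Mathlib

open intervalIntegral Set Real

/-- Cross product in ℝ³. -/
def cross3 (v w : Fin 3 → ℝ) : Fin 3 → ℝ :=
  ![v 1 * w 2 - v 2 * w 1, v 2 * w 0 - v 0 * w 2, v 0 * w 1 - v 1 * w 0]

lemma integral_proj {f : ℝ → Fin 3 → ℝ} {a b : ℝ} (hf : IntervalIntegrable f MeasureTheory.volume a b)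
    (i : Fin 3) : (∫ t in a..b, f t) i = ∫ t in a..b, f t i := by
  exact ((ContinuousLinearMap.proj (R := ℝ) (φ := fun _ : Fin 3 => ℝ) i).intervalIntegral_comp_comm hf).symm

/-- the tangent curve `T(t) = (sin t cos 2t, sin t sin 2t, cos t)`
is unit norm, gives a closed space curve, but does not sweep zero area. -/
theorem stmt_8 (T : ℝ → (Fin 3 → ℝ))
    (hT : ∀ t : ℝ, T t =
      ![Real.sin t * Real.cos (2*t), Real.sin t * Real.sin (2*t), Real.cos t]) :
    (∀ t : ℝ, (T t 0)^2 + (T t 1)^2 + (T t 2)^2 = 1) ∧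
    (∫ t in (0:ℝ)..(2*π), T t) = 0 ∧
    (∫ t in (0:ℝ)..(2*π), cross3 (T t) (deriv T t)) ≠ 0 := by
  have hTfun : T = fun t => ![Real.sin t * Real.cos (2*t), Real.sin t * Real.sin (2*t), Real.cos t] :=
    funext hT
  subst hTfun
  set D : ℝ → Fin 3 → ℝ := fun t =>
    ![Real.cos t * Real.cos (2*t) - 2 * Real.sin t * Real.sin (2*t),
      Real.cos t * Real.sin (2*t) + 2 * Real.sin t * Real.cos (2*t), -Real.sin t] with hD
  have hderiv : ∀ t : ℝ, HasDerivAt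
      (fun t => ![Real.sin t * Real.cos (2*t), Real.sin t * Real.sin (2*t), Real.cos t]) (D t) t := by
    intro t
    rw [hasDerivAt_pi]
    intro i
    have h2c : HasDerivAt (fun t => Real.cos (2*t)) (-Real.sin (2*t) * 2) t :=
      (Real.hasDerivAt_cos (2*t)).comp t (by simpa using (hasDerivAt_id t).const_mul 2)
    have h2s : HasDerivAt (fun t => Real.sin (2*t)) (Real.cos (2*t) * 2) t :=
      (Real.hasDerivAt_sin (2*t)).comp t (by simpa using (hasDerivAt_id t).const_mul 2)
    fin_cases i
    · simp [hD]; exact ((Real.hasDerivAt_sin t).mul h2c).congr_deriv (by ring)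
    · simp [hD]; exact ((Real.hasDerivAt_sin t).mul h2s).congr_deriv (by ring)
    · simpa [hD] using Real.hasDerivAt_cos t
  have hderiveq : (deriv fun t => ![Real.sin t * Real.cos (2*t), Real.sin t * Real.sin (2*t), Real.cos t]) =
      D := funext fun t => (hderiv t).deriv
  have hcontT : Continuous fun t => ![Real.sin t * Real.cos (2*t), Real.sin t * Real.sin (2*t), Real.cos t] := by
    apply continuous_pi
    intro i; fin_cases i <;> simp <;> fun_prop
  refine ⟨?_, ?_, ?_⟩
  · intro t
    simp only [Matrix.cons_val_zero, Matrix.cons_val_one, Matrix.head_cons, Matrix.cons_val_two,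
      Matrix.tail_cons]
    nlinarith [Real.sin_sq_add_cos_sq t, Real.sin_sq_add_cos_sq (2*t)]
  · funext i
    rw [Pi.zero_apply, integral_proj (hcontT.intervalIntegrable _ _)]
    fin_cases i
    · show (∫ t in (0:ℝ)..(2*π), Real.sin t * Real.cos (2*t)) = 0
      have : ∀ t ∈ Set.uIcc (0:ℝ) (2*π), HasDerivAt (fun t => -Real.cos (3*t)/6 + Real.cos t/2)
          (Real.sin t * Real.cos (2*t)) t := by
        intro t _
        have h3 : HasDerivAt (fun t => Real.cos (3*t)) (-Real.sin (3*t) * 3) t :=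
          (Real.hasDerivAt_cos (3*t)).comp t (by simpa using (hasDerivAt_id t).const_mul 3)
        have := ((h3.neg.div_const 6).add ((Real.hasDerivAt_cos t).div_const 2))
        refine this.congr_deriv ?_
        have h3s := Real.sin_three_mul t
        have h2c := Real.cos_two_mul t
        linear_combination -(Real.sin t * h2c - h3s/2 + 2*Real.sin t * (Real.sin_sq_add_cos_sq t))
      rw [intervalIntegral.integral_eq_sub_of_hasDerivAt this
        (by apply Continuous.intervalIntegrable; fun_prop)]
      have h6 : Real.cos (3*(2*π)) = 1 := by
        rw [show (3:ℝ)*(2*π) = (3:ℤ)*(2*π) by norm_num]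
        exact Real.cos_int_mul_two_pi 3
      norm_num [h6, Real.cos_two_pi]
    · show (∫ t in (0:ℝ)..(2*π), Real.sin t * Real.sin (2*t)) = 0
      have : ∀ t ∈ Set.uIcc (0:ℝ) (2*π), HasDerivAt (fun t => Real.sin t/2 - Real.sin (3*t)/6)
          (Real.sin t * Real.sin (2*t)) t := by
        intro t _
        have h3 : HasDerivAt (fun t => Real.sin (3*t)) (Real.cos (3*t) * 3) t :=
          (Real.hasDerivAt_sin (3*t)).comp t (by simpa using (hasDerivAt_id t).const_mul 3)
        have := ((Real.hasDerivAt_sin t).div_const 2).sub (h3.div_const 6)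
        refine this.congr_deriv ?_
        have h2s := Real.sin_two_mul t
        have h3c := Real.cos_three_mul t
        linear_combination -(Real.sin t * h2s + h3c/2 + 2*Real.cos t * (Real.sin_sq_add_cos_sq t))
      rw [intervalIntegral.integral_eq_sub_of_hasDerivAt this
        (by apply Continuous.intervalIntegrable; fun_prop)]
      have h6 : Real.sin (3*(2*π)) = 0 := by
        rw [show (3:ℝ)*(2*π) = (6:ℤ)*π by push_cast; ring]
        exact Real.sin_int_mul_pi 6
      norm_num [h6, Real.sin_two_pi]
    · show (∫ t in (0:ℝ)..(2*π), Real.cos t) = 0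
      simp [integral_cos, Real.sin_two_pi]
  · rw [hderiveq]
    intro h
    have hcont2 : Continuous fun t =>
        cross3 (![Real.sin t * Real.cos (2*t), Real.sin t * Real.sin (2*t), Real.cos t]) (D t) := by
      simp only [cross3, hD, Matrix.cons_val_zero, Matrix.cons_val_one, Matrix.head_cons,
        Matrix.cons_val_two, Matrix.tail_cons]
      apply continuous_pi; intro i; fin_cases i <;> simp <;> fun_prop
    have h2 := congrFun h 2
    rw [Pi.zero_apply, integral_proj (hcont2.intervalIntegrable _ _)] at h2
    have key : ∀ t : ℝ,
        cross3 (![Real.sin t * Real.cos (2*t), Real.sin t * Real.sin (2*t), Real.cos t]) (D t) 2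
        = 2 * Real.sin t ^ 2 := by
      intro t
      simp only [cross3, hD, Matrix.cons_val_zero, Matrix.cons_val_one, Matrix.head_cons,
        Matrix.cons_val_two, Matrix.tail_cons]
      linear_combination 2 * Real.sin t ^ 2 * (Real.sin_sq_add_cos_sq (2*t))
    simp_rw [key] at h2
    have hval : (∫ t in (0:ℝ)..(2*π), 2 * Real.sin t ^ 2) = 2*π := by
      have hd : ∀ t ∈ Set.uIcc (0:ℝ) (2*π), HasDerivAt (fun t => t - Real.sin t * Real.cos t)
          (2 * Real.sin t ^ 2) t := by
        intro t _
        have := (hasDerivAt_id t).sub ((Real.hasDerivAt_sin t).mul (Real.hasDerivAt_cos t))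
        refine this.congr_deriv ?_
        linear_combination -(Real.sin_sq_add_cos_sq t)
      rw [intervalIntegral.integral_eq_sub_of_hasDerivAt hd
        (by apply Continuous.intervalIntegrable; fun_prop)]
      simp [Real.sin_two_pi, Real.cos_two_pi]
    rw [hval] at h2
    have := Real.pi_pos
    linarith
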